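/- Let m ≥ 1, r > 0, β ≥ 1, and let τ : ℝ^m → ℝ be Lipschitz with Lipschitz constant Lip(τ) and satisfy 1/β ≤ τ ≤ β. Then for every f ∈ L²(ℝ^m): ∫_{ℝ^m} τ(x) (Λ_r f)(x)² dx ≤ (1 + Lip(τ) β r) ∫_{ℝ^m} τ(x) f(x)² dx. -/

import Mathlib

open MeasureTheory

/-- The Lebesgue volume of the unit ball in `ℝ^m`. -/
noncomputable def unitBallVol (m : ℕ) : ℝ :=
  (volume (Metric.ball (0 : EuclideanSpace ℝ (Fin m)) 1)).toReal

/-- The profile `ψ(t) = ((m+2)/(2ν_m))(1 − t²)` for `0 ≤ t ≤ 1`, and `0` for `t > 1`. -/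
noncomputable def smoothPsi (m : ℕ) (t : ℝ) : ℝ :=
  if t ≤ 1 then (((m : ℝ) + 2) / (2 * unitBallVol m)) * (1 - t ^ 2) else 0

/-- The smoothing kernel `k_r(x,y) = r^{−m} ψ(|x−y|/r)`. -/
noncomputable def smoothKernel (m : ℕ) (r : ℝ) (x y : EuclideanSpace ℝ (Fin m)) : ℝ :=
  (r ^ m)⁻¹ * smoothPsi m (dist x y / r)

/-- The smoothing operator `Λ_r f(x) = ∫ k_r(x,y) f(y) dy`. -/
noncomputable def smoothOp (m : ℕ) (r : ℝ) (f : EuclideanSpace ℝ (Fin m) → ℝ)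
    (x : EuclideanSpace ℝ (Fin m)) : ℝ :=
  ∫ y, smoothKernel m r x y * f y

namespace Stmt13Aux

open Metric

lemma unitBallVol_pos (m : ℕ) : 0 < unitBallVol m := by
  have h1 : (0:ENNReal) < volume (Metric.ball (0 : EuclideanSpace ℝ (Fin m)) 1) :=
    measure_ball_pos volume 0 one_pos
  have h2 : volume (Metric.ball (0 : EuclideanSpace ℝ (Fin m)) 1) < ⊤ :=
    measure_ball_lt_top
  exact ENNReal.toReal_pos h1.ne' h2.ne

/-- The normalizing constant. -/
noncomputable def psiC (m : ℕ) : ℝ := ((m : ℝ) + 2) / (2 * unitBallVol m)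

lemma psiC_nonneg (m : ℕ) : 0 ≤ psiC m :=
  div_nonneg (by positivity) (by have := unitBallVol_pos m; linarith)

lemma smoothPsi_nonneg (m : ℕ) {t : ℝ} (ht : 0 ≤ t) : 0 ≤ smoothPsi m t := by
  unfold smoothPsi
  split_ifs with h
  · exact mul_nonneg (psiC_nonneg m) (by nlinarith)
  · exact le_refl 0

lemma smoothPsi_le (m : ℕ) {t : ℝ} (ht : 0 ≤ t) : smoothPsi m t ≤ psiC m := by
  unfold smoothPsi
  split_ifs with h
  · have := psiC_nonneg m
    have : psiC m * (1 - t^2) ≤ psiC m * 1 := by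
      apply mul_le_mul_of_nonneg_left _ (psiC_nonneg m)
      nlinarith
    simpa [psiC] using this
  · exact psiC_nonneg m

lemma measurable_smoothPsi (m : ℕ) : Measurable (smoothPsi m) := by
  unfold smoothPsi
  exact Measurable.ite (measurableSet_le measurable_id measurable_const)
    (by fun_prop) measurable_const

section kernel

variable {m : ℕ} {r : ℝ}

lemma smoothKernel_nonneg (hr : 0 < r) (x y : EuclideanSpace ℝ (Fin m)) :
    0 ≤ smoothKernel m r x y :=
  mul_nonneg (by positivity) (smoothPsi_nonneg m (by positivity))

lemma smoothKernel_le (hr : 0 < r) (x y : EuclideanSpace ℝ (Fin m)) :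
    smoothKernel m r x y ≤ (r ^ m)⁻¹ * psiC m :=
  mul_le_mul_of_nonneg_left (smoothPsi_le m (by positivity)) (by positivity)

lemma smoothKernel_eq_zero (hr : 0 < r) {x y : EuclideanSpace ℝ (Fin m)}
    (h : r < dist x y) : smoothKernel m r x y = 0 := by
  unfold smoothKernel smoothPsi
  have : ¬ (dist x y / r ≤ 1) := by
    rw [not_le, lt_div_iff₀ hr]
    simpa using h
  rw [if_neg this, mul_zero]

lemma smoothKernel_symm (x y : EuclideanSpace ℝ (Fin m)) :
    smoothKernel m r x y = smoothKernel m r y x := by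
  unfold smoothKernel; rw [dist_comm]

set_option maxHeartbeats 1000000 in
lemma measurable_smoothKernel_prod :
    Measurable (fun p : EuclideanSpace ℝ (Fin m) × EuclideanSpace ℝ (Fin m) =>
      smoothKernel m r p.1 p.2) := by
  unfold smoothKernel
  have h1 : Measurable (fun p : EuclideanSpace ℝ (Fin m) × EuclideanSpace ℝ (Fin m) =>
      dist p.1 p.2 / r) := continuous_dist.measurable.div_const r
  exact measurable_const.mul ((measurable_smoothPsi m).comp h1)

lemma measurable_smoothKernel_right (x : EuclideanSpace ℝ (Fin m)) :
    Measurable (fun y => smoothKernel m r x y) := by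
  unfold smoothKernel
  have h1 : Measurable (fun y : EuclideanSpace ℝ (Fin m) => dist x y / r) :=
    ((Continuous.dist continuous_const continuous_id).measurable).div_const r
  exact measurable_const.mul ((measurable_smoothPsi m).comp h1)

lemma integrable_smoothKernel (hr : 0 < r) (x : EuclideanSpace ℝ (Fin m)) :
    Integrable (fun y => smoothKernel m r x y) := by
  set B : ℝ := (r ^ m)⁻¹ * psiC m with hB
  have hind : Integrable ((Metric.closedBall x r).indicator (fun _ => B)) volume := by
    rw [integrable_indicator_iff measurableSet_closedBall]
    exact integrableOn_const measure_closedBall_lt_top.ne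
  refine hind.mono' (measurable_smoothKernel_right x).aestronglyMeasurable ?_
  filter_upwards with y
  rw [Real.norm_eq_abs, abs_of_nonneg (smoothKernel_nonneg hr x y)]
  by_cases hy : y ∈ Metric.closedBall x r
  · rw [Set.indicator_of_mem hy]
    exact smoothKernel_le hr x y
  · rw [Set.indicator_of_notMem hy]
    have : r < dist x y := by
      rw [Metric.mem_closedBall] at hy
      rw [dist_comm]; exact not_le.mp hy
    rw [smoothKernel_eq_zero hr this]

end kernel

lemma integral_Ioi_psi (m : ℕ) (hm : 1 ≤ m) :
    ∫ y in Set.Ioi (0:ℝ), y ^ (m - 1) * smoothPsi m y = (1 : ℝ) / (m * unitBallVol m) := by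
  set C : ℝ := ((m : ℝ) + 2) / (2 * unitBallVol m) with hC
  have hsplit : Set.Ioc (0:ℝ) 1 ∪ Set.Ioi (1:ℝ) = Set.Ioi 0 := Set.Ioc_union_Ioi_eq_Ioi zero_le_one
  have hcongr1 : Set.EqOn (fun y : ℝ => y ^ (m - 1) * smoothPsi m y)
      (fun y : ℝ => C * (y ^ (m - 1) - y ^ (m + 1))) (Set.Ioc 0 1) := by
    intro y hy
    have h1 : y ≤ 1 := hy.2
    simp only [smoothPsi, if_pos h1]
    have : y ^ (m-1) * y ^ 2 = y ^ (m+1) := by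
      rw [← pow_add]
      congr 1
      omega
    calc (fun y : ℝ => y ^ (m - 1) * (C * (1 - y ^ 2))) y
        = C * y ^ (m-1) - C * (y ^ (m-1) * y ^ 2) := by ring
      _ = C * (y ^ (m - 1) - y ^ (m + 1)) := by rw [this]; ring
  have hcongr2 : Set.EqOn (fun y : ℝ => y ^ (m - 1) * smoothPsi m y)
      (fun _ : ℝ => (0:ℝ)) (Set.Ioi 1) := by
    intro y hy
    have : ¬ (y ≤ 1) := not_le.mpr hy
    simp [smoothPsi, this]
  have hi1 : IntegrableOn (fun y : ℝ => y ^ (m - 1) * smoothPsi m y) (Set.Ioc 0 1) := by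
    rw [integrableOn_congr_fun hcongr1 measurableSet_Ioc]
    exact (Continuous.integrableOn_Ioc (by continuity))
  have hi2 : IntegrableOn (fun y : ℝ => y ^ (m - 1) * smoothPsi m y) (Set.Ioi 1) := by
    rw [integrableOn_congr_fun hcongr2 measurableSet_Ioi]
    exact integrableOn_zero
  rw [← hsplit, setIntegral_union (Set.Ioc_disjoint_Ioi le_rfl) measurableSet_Ioi hi1 hi2]
  rw [setIntegral_congr_fun measurableSet_Ioi hcongr2, integral_zero, add_zero]
  rw [setIntegral_congr_fun measurableSet_Ioc hcongr1]
  rw [← intervalIntegral.integral_of_le zero_le_one]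
  rw [intervalIntegral.integral_const_mul]
  rw [intervalIntegral.integral_sub (intervalIntegral.intervalIntegrable_pow _)
    (intervalIntegral.intervalIntegrable_pow _)]
  rw [integral_pow, integral_pow]
  have hcast : ((m - 1 : ℕ) : ℝ) + 1 = (m : ℝ) := by
    have : (m - 1) + 1 = m := by omega
    exact_mod_cast congrArg (Nat.cast : ℕ → ℝ) this
  have hν := (unitBallVol_pos m).ne'
  have hm0 : (m:ℝ) ≠ 0 := by positivity
  have hm2 : (m:ℝ) + 2 ≠ 0 := by positivity
  rw [hcast]
  push_cast
  field_simp
  linear_combination ((m:ℝ) + 2) * mul_inv_cancel₀ hν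

lemma integral_smoothKernel_one (m : ℕ) (hm : 1 ≤ m) {r : ℝ} (hr : 0 < r)
    (x : EuclideanSpace ℝ (Fin m)) : ∫ y, smoothKernel m r x y = 1 := by
  haveI : Nontrivial (EuclideanSpace ℝ (Fin m)) := by
    apply Module.nontrivial_of_finrank_pos (R := ℝ)
    rw [finrank_euclideanSpace_fin]; omega
  have hrm : (r : ℝ) ^ m ≠ 0 := by positivity
  have step1 : ∫ y, smoothKernel m r x y
      = (r ^ m)⁻¹ * ∫ y, smoothPsi m (dist x y / r) := by
    unfold smoothKernel; exact integral_const_mul _ _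
  have step2 : ∫ y, smoothPsi m (dist x y / r)
      = ∫ y : EuclideanSpace ℝ (Fin m), smoothPsi m (‖r⁻¹ • y‖) := by
    rw [← integral_add_left_eq_self (μ := volume)
      (fun y : EuclideanSpace ℝ (Fin m) => smoothPsi m (dist x y / r)) x]
    congr 1; ext y
    rw [dist_eq_norm, norm_smul]
    congr 1
    rw [Real.norm_eq_abs, abs_of_nonneg (inv_nonneg.2 hr.le), div_eq_inv_mul, norm_sub_rev]
    congr 1
    rw [add_sub_cancel_left]
  have step3 : ∫ y : EuclideanSpace ℝ (Fin m), smoothPsi m (‖r⁻¹ • y‖)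
      = r ^ m * ∫ y : EuclideanSpace ℝ (Fin m), smoothPsi m ‖y‖ := by
    rw [Measure.integral_comp_smul_of_nonneg (μ := volume)
      (fun y : EuclideanSpace ℝ (Fin m) => smoothPsi m ‖y‖) r⁻¹ (hR := inv_nonneg.2 hr.le)]
    rw [finrank_euclideanSpace_fin, inv_pow, inv_inv, smul_eq_mul]
  have step4 : ∫ y : EuclideanSpace ℝ (Fin m), smoothPsi m ‖y‖
      = m * (unitBallVol m * ((1:ℝ) / (m * unitBallVol m))) := by
    rw [integral_fun_norm_addHaar (volume : Measure (EuclideanSpace ℝ (Fin m))) (smoothPsi m)]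
    rw [finrank_euclideanSpace_fin]
    simp only [nsmul_eq_mul, smul_eq_mul]
    rw [show (volume.real (ball (0 : EuclideanSpace ℝ (Fin m)) 1)) = unitBallVol m from rfl]
    rw [integral_Ioi_psi m hm]
  have hν := (unitBallVol_pos m).ne'
  have hm0 : (m:ℝ) ≠ 0 := by positivity
  rw [step1, step2, step3, step4]
  field_simp

theorem main_aux (m : ℕ) (hm : 1 ≤ m) (r : ℝ) (hr : 0 < r) (β : ℝ) (hβ : 1 ≤ β)
    (τ : EuclideanSpace ℝ (Fin m) → ℝ) (L : NNReal) (hτLip : LipschitzWith L τ)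
    (hτlb : ∀ x, 1 / β ≤ τ x) (hτub : ∀ x, τ x ≤ β)
    (f : EuclideanSpace ℝ (Fin m) → ℝ) (hf : MemLp f 2 volume)
    (hfm : Measurable f) :
    ∫ x, τ x * (smoothOp m r f x) ^ 2
      ≤ (1 + (L : ℝ) * β * r) * ∫ x, τ x * f x ^ 2 := by
  set K := smoothKernel m r with hK
  set B : ℝ := (r ^ m)⁻¹ * psiC m with hB
  have hβ0 : (0:ℝ) < β := lt_of_lt_of_le one_pos hβ
  have hτ0 : ∀ x, 0 ≤ τ x := fun x => le_trans (by positivity) (hτlb x)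
  have hτc : Continuous τ := hτLip.continuous
  have hfsq : Integrable (fun y => f y ^ 2) := hf.integrable_sq
  have hKf2 : ∀ x, Integrable (fun y => K x y * f y ^ 2) := by
    intro x
    refine (hfsq.const_mul B).mono'
      (((measurable_smoothKernel_right x).mul (hfm.pow_const 2)).aestronglyMeasurable) ?_
    filter_upwards with y
    rw [Real.norm_eq_abs, abs_of_nonneg (mul_nonneg (smoothKernel_nonneg hr x y) (sq_nonneg _))]
    exact mul_le_mul_of_nonneg_right (smoothKernel_le hr x y) (sq_nonneg _)
  have hKf : ∀ x, Integrable (fun y => K x y * f y) := by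
    intro x
    refine ((integrable_smoothKernel hr x).add (hfsq.const_mul B)).mono'
      ((measurable_smoothKernel_right x).mul hfm).aestronglyMeasurable ?_
    filter_upwards with y
    have h0 := smoothKernel_nonneg hr x y
    have h1 := smoothKernel_le hr x y
    rw [Real.norm_eq_abs, abs_mul, abs_of_nonneg h0]
    have h2 : |f y| ≤ (1 + f y ^ 2)/2 := by nlinarith [sq_nonneg (|f y| - 1), sq_abs (f y)]
    simp only [Pi.add_apply, hB]
    nlinarith [mul_le_mul_of_nonneg_left h2 h0,
      mul_le_mul_of_nonneg_right h1 (sq_nonneg (f y)), sq_nonneg (f y)]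
  have hCS : ∀ x, (smoothOp m r f x) ^ 2 ≤ ∫ y, K x y * f y ^ 2 := by
    intro x
    set c := smoothOp m r f x with hc
    have hKone := integral_smoothKernel_one m hm hr x
    have hexp : ∀ y, K x y * (f y - c) ^ 2
        = K x y * f y ^ 2 - (2*c) * (K x y * f y) + (c^2) * K x y := by
      intro y; ring
    have h0 : 0 ≤ ∫ y, K x y * (f y - c) ^ 2 :=
      integral_nonneg fun y => mul_nonneg (smoothKernel_nonneg hr x y) (sq_nonneg _)
    have hI : ∫ y, K x y * (f y - c) ^ 2
        = (∫ y, K x y * f y ^ 2) - (2*c) * (∫ y, K x y * f y) + (c^2) * (∫ y, K x y) := by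
      simp_rw [hexp]
      have ha : Integrable (fun y => K x y * f y ^ 2 - 2*c*(K x y * f y)) volume :=
        (hKf2 x).sub ((hKf x).const_mul (2*c))
      have hb : Integrable (fun y => c^2 * K x y) volume :=
        (integrable_smoothKernel hr x).const_mul _
      rw [integral_add ha hb, integral_sub (hKf2 x) ((hKf x).const_mul _),
        integral_const_mul, integral_const_mul]
    rw [hI, hKone] at h0
    have hcdef : ∫ y, K x y * f y = c := rfl
    rw [hcdef] at h0
    nlinarith [h0]
  have hGmeas : AEStronglyMeasurable
      (fun p : EuclideanSpace ℝ (Fin m) × EuclideanSpace ℝ (Fin m) => K p.1 p.2 * f p.2 ^ 2)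
      (volume.prod volume) :=
    (measurable_smoothKernel_prod.mul
      ((hfm.comp measurable_snd).pow_const 2)).aestronglyMeasurable
  have hG : Integrable
      (fun p : EuclideanSpace ℝ (Fin m) × EuclideanSpace ℝ (Fin m) => K p.1 p.2 * f p.2 ^ 2)
      (volume.prod volume) := by
    rw [integrable_prod_iff' hGmeas]
    constructor
    · filter_upwards with y
      have hsym : (fun x => K x y) = fun x => K y x := funext fun x => smoothKernel_symm x y
      have hint : Integrable (fun x => K x y) := by rw [hsym]; exact integrable_smoothKernel hr y
      exact hint.mul_const (f y ^ 2)
    · apply hfsq.congr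
      filter_upwards with y
      have h1 : ∀ x, ‖K x y * f y ^ 2‖ = K x y * f y ^ 2 := fun x =>
        Real.norm_of_nonneg (mul_nonneg (smoothKernel_nonneg hr x y) (sq_nonneg _))
      simp_rw [h1]
      rw [integral_mul_const]
      have hsym : (fun x => K x y) = fun x => K y x := funext fun x => smoothKernel_symm x y
      rw [hsym, integral_smoothKernel_one m hm hr y, one_mul]
  have hFmeas : AEStronglyMeasurable
      (fun p : EuclideanSpace ℝ (Fin m) × EuclideanSpace ℝ (Fin m) =>
        τ p.1 * (K p.1 p.2 * f p.2 ^ 2)) (volume.prod volume) :=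
    ((hτc.measurable.comp measurable_fst).mul (measurable_smoothKernel_prod.mul
      ((hfm.comp measurable_snd).pow_const 2))).aestronglyMeasurable
  have hF : Integrable
      (fun p : EuclideanSpace ℝ (Fin m) × EuclideanSpace ℝ (Fin m) =>
        τ p.1 * (K p.1 p.2 * f p.2 ^ 2)) (volume.prod volume) := by
    refine (hG.const_mul β).mono' hFmeas ?_
    filter_upwards with p
    have hg0 : 0 ≤ K p.1 p.2 * f p.2 ^ 2 :=
      mul_nonneg (smoothKernel_nonneg hr _ _) (sq_nonneg _)
    rw [Real.norm_eq_abs, abs_of_nonneg (mul_nonneg (hτ0 _) hg0)]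
    exact mul_le_mul_of_nonneg_right (hτub _) hg0
  have hτK : ∀ y, Integrable (fun x => τ x * K x y) := by
    intro y
    have hsym : (fun x => K x y) = fun x => K y x := funext fun x => smoothKernel_symm x y
    have hint : Integrable (fun x => K x y) := by rw [hsym]; exact integrable_smoothKernel hr y
    have hmeas : Measurable (fun x => K x y) := by
      rw [hsym]; exact measurable_smoothKernel_right y
    refine (hint.const_mul β).mono' (hτc.measurable.mul hmeas).aestronglyMeasurable ?_
    filter_upwards with x
    rw [Real.norm_eq_abs, abs_of_nonneg (mul_nonneg (hτ0 x) (smoothKernel_nonneg hr x y))]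
    exact mul_le_mul_of_nonneg_right (hτub x) (smoothKernel_nonneg hr x y)
  have hinner : ∀ y, ∫ x, τ x * K x y ≤ (1 + (L:ℝ)*β*r) * τ y := by
    intro y
    have hsym : (fun x => K x y) = fun x => K y x := funext fun x => smoothKernel_symm x y
    have hint : Integrable (fun x => K x y) := by rw [hsym]; exact integrable_smoothKernel hr y
    have step : ∫ x, τ x * K x y ≤ ∫ x, (τ y + (L:ℝ)*r) * K x y := by
      apply integral_mono (hτK y) (hint.const_mul _)
      intro x
      by_cases hd : dist x y ≤ r
      · apply mul_le_mul_of_nonneg_right _ (smoothKernel_nonneg hr x y)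
        have hL := hτLip.dist_le_mul x y
        rw [Real.dist_eq] at hL
        have h2 : τ x - τ y ≤ |τ x - τ y| := le_abs_self _
        have h3 : (L:ℝ) * dist x y ≤ (L:ℝ) * r := mul_le_mul_of_nonneg_left hd L.coe_nonneg
        linarith
      · have hz : K x y = 0 := smoothKernel_eq_zero hr (not_le.mp hd)
        simp [hz]
    have step2 : ∫ x, (τ y + (L:ℝ)*r) * K x y = τ y + (L:ℝ)*r := by
      rw [integral_const_mul, hsym, integral_smoothKernel_one m hm hr y, mul_one]
    have h1 : 1 ≤ β * τ y := by
      have h := hτlb y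
      rw [div_le_iff₀ hβ0] at h
      linarith
    have hLr : 0 ≤ (L:ℝ)*r := mul_nonneg L.coe_nonneg hr.le
    calc ∫ x, τ x * K x y ≤ τ y + (L:ℝ)*r := by rw [← step2]; exact step
      _ ≤ (1 + (L:ℝ)*β*r) * τ y := by nlinarith [mul_le_mul_of_nonneg_left h1 hLr]
  have hτf2 : Integrable (fun y => τ y * f y ^ 2) := by
    refine (hfsq.const_mul β).mono' (hτc.measurable.mul (hfm.pow_const 2)).aestronglyMeasurable ?_
    filter_upwards with y
    rw [Real.norm_eq_abs, abs_of_nonneg (mul_nonneg (hτ0 y) (sq_nonneg _))]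
    exact mul_le_mul_of_nonneg_right (hτub y) (sq_nonneg _)
  calc ∫ x, τ x * (smoothOp m r f x) ^ 2
      ≤ ∫ x, ∫ y, τ x * (K x y * f y ^ 2) := by
        apply integral_mono_of_nonneg
        · filter_upwards with x
          exact mul_nonneg (hτ0 x) (sq_nonneg _)
        · exact hF.integral_prod_left
        · filter_upwards with x
          rw [integral_const_mul]
          exact mul_le_mul_of_nonneg_left (hCS x) (hτ0 x)
    _ = ∫ y, ∫ x, τ x * (K x y * f y ^ 2) :=
        integral_integral_swap (f := fun x y => τ x * (K x y * f y ^ 2)) hF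
    _ ≤ ∫ y, (1 + (L:ℝ)*β*r) * (τ y * f y ^ 2) := by
        apply integral_mono_of_nonneg
        · filter_upwards with y
          exact integral_nonneg fun x =>
            mul_nonneg (hτ0 x) (mul_nonneg (smoothKernel_nonneg hr x y) (sq_nonneg _))
        · exact hτf2.const_mul _
        · filter_upwards with y
          have hassoc : (fun x => τ x * (K x y * f y ^ 2)) = fun x => (τ x * K x y) * f y ^ 2 := by
            funext x; ring
          rw [hassoc, integral_mul_const]
          calc (∫ x, τ x * K x y) * f y ^ 2
              ≤ ((1 + (L:ℝ)*β*r) * τ y) * f y ^ 2 :=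
                mul_le_mul_of_nonneg_right (hinner y) (sq_nonneg _)
            _ = (1 + (L:ℝ)*β*r) * (τ y * f y ^ 2) := by ring
    _ = (1 + (L:ℝ)*β*r) * ∫ y, τ y * f y ^ 2 := integral_const_mul _ _

end Stmt13Aux

theorem stmt_13 (m : ℕ) (hm : 1 ≤ m) (r : ℝ) (hr : 0 < r) (β : ℝ) (hβ : 1 ≤ β)
    (τ : EuclideanSpace ℝ (Fin m) → ℝ) (L : NNReal) (hτLip : LipschitzWith L τ)
    (hτlb : ∀ x, 1 / β ≤ τ x) (hτub : ∀ x, τ x ≤ β)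
    (f : EuclideanSpace ℝ (Fin m) → ℝ) (hf : MemLp f 2 volume) :
    ∫ x, τ x * (smoothOp m r f x) ^ 2
      ≤ (1 + (L : ℝ) * β * r) * ∫ x, τ x * f x ^ 2 := by
  obtain ⟨g, hgm, hfg⟩ := hf.aestronglyMeasurable
  have hg2 : MemLp g 2 volume := hf.ae_eq hfg
  have hop : ∀ x, smoothOp m r f x = smoothOp m r g x := fun x =>
    integral_congr_ae (hfg.mono fun y hy => by dsimp only; rw [hy])
  have h1 : ∫ x, τ x * (smoothOp m r f x) ^ 2 = ∫ x, τ x * (smoothOp m r g x) ^ 2 := by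
    simp_rw [hop]
  have h2 : ∫ x, τ x * f x ^ 2 = ∫ x, τ x * g x ^ 2 :=
    integral_congr_ae (hfg.mono fun x hx => by dsimp only; rw [hx])
  rw [h1, h2]
  exact Stmt13Aux.main_aux m hm r hr β hβ τ L hτLip hτlb hτub g hg2 hgm.measurable
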